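/- Let v ≥ 1 and suppose there exist subsets X₁, X₂, X₃, X₄ of ℤ/vℤ forming supplementary difference sets with parameters (v; k₁, k₂, k₃, k₄; λ) where λ = k₁ + k₂ + k₃ + k₄ − v. Then there exists a Hadamard matrix of order 4v. -/

import Mathlib

open Matrix

/-- `X 1, …, X t ⊆ ℤ/vℤ` are supplementary difference sets with parameters
`(v; k 1, …, k t; lam)`. -/
def IsSDS {v t : ℕ} (X : Fin t → Finset (ZMod v)) (k : Fin t → ℕ) (lam : ℕ) : Prop :=
  (∀ i, (X i).card = k i) ∧
  ∀ c : ZMod v, c ≠ 0 →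
    (∑ i, ((X i ×ˢ X i).filter fun p => p.1 - p.2 = c).card) = lam

open Matrix Finset
section
variable {v : ℕ} [NeZero v]

def Pm (f : ZMod v → ℤ) (x z : ZMod v) : ℤ := f (x - z)
def Qm (f : ZMod v → ℤ) (x z : ZMod v) : ℤ := f (x + z)
def Qn (f : ZMod v → ℤ) (x z : ZMod v) : ℤ := f (-(x + z))

def Tc (f h : ZMod v → ℤ) (c : ZMod v) : ℤ := ∑ w : ZMod v, f w * h (w + c)
def Uc (f h : ZMod v → ℤ) (s : ZMod v) : ℤ := ∑ w : ZMod v, f w * h (s - w)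

lemma PP (f h : ZMod v → ℤ) (x y : ZMod v) :
    ∑ z : ZMod v, Pm f x z * Pm h y z = Tc f h (y - x) := by
  apply Fintype.sum_equiv (Equiv.subLeft x)
  intro z
  simp only [Pm, Tc, Equiv.subLeft_apply]
  ring_nf

lemma QQ (f h : ZMod v → ℤ) (x y : ZMod v) :
    ∑ z : ZMod v, Qm f x z * Qm h y z = Tc f h (y - x) := by
  apply Fintype.sum_equiv (Equiv.addLeft x)
  intro z
  simp only [Qm, Tc, Equiv.coe_addLeft]
  ring_nf

lemma NN (f h : ZMod v → ℤ) (x y : ZMod v) :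
    ∑ z : ZMod v, Qn f x z * Qn h y z = Tc h f (y - x) := by
  apply Fintype.sum_equiv (Equiv.trans (Equiv.addLeft y) (Equiv.neg _))
  intro z
  simp only [Qn, Tc, Equiv.trans_apply, Equiv.coe_addLeft, Equiv.neg_apply]
  rw [mul_comm]
  ring_nf

lemma PQ (f h : ZMod v → ℤ) (x y : ZMod v) :
    ∑ z : ZMod v, Pm f x z * Qm h y z = Uc f h (x + y) := by
  apply Fintype.sum_equiv (Equiv.subLeft x)
  intro z
  simp only [Pm, Qm, Uc, Equiv.subLeft_apply]
  ring_nf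

lemma QP (f h : ZMod v → ℤ) (x y : ZMod v) :
    ∑ z : ZMod v, Qm f x z * Pm h y z = Uc h f (x + y) := by
  apply Fintype.sum_equiv (Equiv.subLeft y)
  intro z
  simp only [Qm, Pm, Uc, Equiv.subLeft_apply]
  rw [mul_comm]
  ring_nf

lemma PN (f h : ZMod v → ℤ) (x y : ZMod v) :
    ∑ z : ZMod v, Pm f x z * Qn h y z = Tc h f (x + y) := by
  apply Fintype.sum_equiv (Equiv.trans (Equiv.addLeft y) (Equiv.neg _))
  intro z
  simp only [Pm, Qn, Tc, Equiv.trans_apply, Equiv.coe_addLeft, Equiv.neg_apply]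
  rw [mul_comm]
  ring_nf

lemma NP (f h : ZMod v → ℤ) (x y : ZMod v) :
    ∑ z : ZMod v, Qn f x z * Pm h y z = Tc f h (x + y) := by
  apply Fintype.sum_equiv (Equiv.trans (Equiv.addLeft x) (Equiv.neg _))
  intro z
  simp only [Qn, Pm, Tc, Equiv.trans_apply, Equiv.coe_addLeft, Equiv.neg_apply]
  ring_nf

lemma QN (f h : ZMod v → ℤ) (x y : ZMod v) :
    ∑ z : ZMod v, Qm f x z * Qn h y z = Uc h f (x - y) := by
  apply Fintype.sum_equiv (Equiv.trans (Equiv.addLeft y) (Equiv.neg _))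
  intro z
  simp only [Qm, Qn, Uc, Equiv.trans_apply, Equiv.coe_addLeft, Equiv.neg_apply]
  rw [mul_comm]
  ring_nf

lemma NQ (f h : ZMod v → ℤ) (x y : ZMod v) :
    ∑ z : ZMod v, Qn f x z * Qm h y z = Uc f h (y - x) := by
  apply Fintype.sum_equiv (Equiv.trans (Equiv.addLeft x) (Equiv.neg _))
  intro z
  simp only [Qn, Qm, Uc, Equiv.trans_apply, Equiv.coe_addLeft, Equiv.neg_apply]
  ring_nf

lemma Usymm (f h : ZMod v → ℤ) (s : ZMod v) : Uc f h s = Uc h f s := by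
  apply Fintype.sum_equiv (Equiv.subLeft s)
  intro w
  simp only [Uc, Equiv.subLeft_apply]
  rw [mul_comm]
  ring_nf

def GS (g : Fin 4 → ZMod v → ℤ) : Fin 4 → Fin 4 → ZMod v → ZMod v → ℤ :=
  ![![Pm (g 0), Qm (g 1), Qm (g 2), Qm (g 3)],
    ![fun x z => -Qm (g 1) x z, Pm (g 0), fun x z => -Qn (g 3) x z, Qn (g 2)],
    ![fun x z => -Qm (g 2) x z, Qn (g 3), Pm (g 0), fun x z => -Qn (g 1) x z],
    ![fun x z => -Qm (g 3) x z, fun x z => -Qn (g 2) x z, Qn (g 1), Pm (g 0)]]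

set_option maxHeartbeats 2000000 in
lemma Ucancel1 (f h : ZMod v → ℤ) (s : ZMod v) : -Uc f h s + Uc h f s = 0 := by
  rw [Usymm]; ring

lemma Ucancel2 (f h : ZMod v → ℤ) (s : ZMod v) : Uc f h s - Uc h f s = 0 := by
  rw [Usymm]; ring

lemma fmk0 (h : 0 < 4) : (⟨0, h⟩ : Fin 4) = 0 := rfl
lemma fmk1 (h : 1 < 4) : (⟨1, h⟩ : Fin 4) = 1 := rfl
lemma fmk2 (h : 2 < 4) : (⟨2, h⟩ : Fin 4) = 2 := rfl
lemma fmk3 (h : 3 < 4) : (⟨3, h⟩ : Fin 4) = 3 := rfl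

lemma rowdot (g : Fin 4 → ZMod v → ℤ) (i j : Fin 4) (x y : ZMod v) :
    ∑ p : Fin 4, ∑ z : ZMod v, GS g i p x z * GS g j p y z =
      if i = j then ∑ t : Fin 4, Tc (g t) (g t) (y - x) else 0 := by
  fin_cases i <;> fin_cases j <;>
    simp only [GS, fmk0, fmk1, fmk2, fmk3, Fin.sum_univ_four, Fin.isValue, Matrix.cons_val_zero,
      Matrix.cons_val_one, Matrix.head_cons, Matrix.cons_val_two, Matrix.tail_cons,
      Matrix.cons_val_three, neg_mul, mul_neg, neg_neg, Finset.sum_neg_distrib,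
      PP, QQ, NN, PQ, QP, PN, NP, QN, NQ, Fin.reduceEq, if_true, if_false, reduceIte,
      ite_true, ite_false] <;>
    first
    | ring1
    | linear_combination Usymm (g 3) (g 2) (x - y)
    | linear_combination Usymm (g 2) (g 3) (x - y)
    | linear_combination Usymm (g 3) (g 1) (x - y)
    | linear_combination Usymm (g 1) (g 3) (x - y)
    | linear_combination Usymm (g 2) (g 1) (x - y)
    | linear_combination Usymm (g 1) (g 2) (x - y)
    | linear_combination Usymm (g 3) (g 2) (y - x)
    | linear_combination Usymm (g 2) (g 3) (y - x)
    | linear_combination Usymm (g 3) (g 1) (y - x)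
    | linear_combination Usymm (g 1) (g 3) (y - x)
    | linear_combination Usymm (g 2) (g 1) (y - x)
    | linear_combination Usymm (g 1) (g 2) (y - x)

def gfun (X : Finset (ZMod v)) (u : ZMod v) : ℤ := if u ∈ X then -1 else 1

lemma gfun_pm (X : Finset (ZMod v)) (u : ZMod v) : gfun X u = 1 ∨ gfun X u = -1 := by
  unfold gfun; split_ifs <;> simp

lemma Tgg_zero (X : Finset (ZMod v)) : Tc (gfun X) (gfun X) 0 = (v : ℤ) := by
  unfold Tc
  have h1 : ∀ w : ZMod v, gfun X w * gfun X (w + 0) = 1 := by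
    intro w; rcases gfun_pm X w with h | h <;> simp [h]
  rw [Finset.sum_congr rfl fun w _ => h1 w]
  simp [Finset.card_univ, ZMod.card]

lemma chi_sum (X : Finset (ZMod v)) :
    ∑ w : ZMod v, (if w ∈ X then (1:ℤ) else 0) = X.card := by
  rw [Finset.sum_ite_mem]
  simp

lemma chi_sum_shift (X : Finset (ZMod v)) (c : ZMod v) :
    ∑ w : ZMod v, (if w + c ∈ X then (1:ℤ) else 0) = X.card := by
  rw [← chi_sum X]
  apply Fintype.sum_equiv (Equiv.addRight c)
  intro w
  simp
  congr

lemma count_pairs (X : Finset (ZMod v)) (c : ZMod v) :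
    ∑ w : ZMod v, (if w ∈ X then (1:ℤ) else 0) * (if w + c ∈ X then (1:ℤ) else 0)
      = ((X ×ˢ X).filter fun p => p.1 - p.2 = c).card := by
  have h1 : ∀ w : ZMod v, (if w ∈ X then (1:ℤ) else 0) * (if w + c ∈ X then (1:ℤ) else 0)
      = if w ∈ Finset.univ.filter (fun w => w ∈ X ∧ w + c ∈ X) then 1 else 0 := by
    intro w
    simp only [Finset.mem_filter, Finset.mem_univ, true_and]
    split_ifs <;> simp_all
  rw [Finset.sum_congr rfl fun w _ => h1 w, Finset.sum_ite_mem, Finset.univ_inter,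
    Finset.sum_const, nsmul_eq_mul, mul_one]
  congr 1
  symm
  apply Finset.card_bij (fun (p : ZMod v × ZMod v) _ => p.2)
  · rintro ⟨a, b⟩ hp
    simp only [Finset.mem_filter, Finset.mem_product] at hp ⊢
    obtain ⟨⟨ha, hb⟩, hc⟩ := hp
    exact ⟨Finset.mem_univ b, hb, by rw [show b + c = a by rw [← hc]; ring]; exact ha⟩
  · rintro ⟨a, b⟩ hp ⟨a', b'⟩ hp' hbb
    simp only [Finset.mem_filter, Finset.mem_product] at hp hp'
    simp only at hbb
    have : a = a' := by
      have h1 := hp.2; have h2 := hp'.2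
      rw [sub_eq_iff_eq_add] at h1 h2
      rw [h1, h2, hbb]
    exact Prod.ext this hbb
  · intro w hw
    simp only [Finset.mem_filter, Finset.mem_univ, true_and] at hw
    exact ⟨(w + c, w), by simp [Finset.mem_filter, Finset.mem_product, hw.1, hw.2], rfl⟩

lemma Tgg_ne (X : Finset (ZMod v)) (c : ZMod v) :
    Tc (gfun X) (gfun X) c
      = (v : ℤ) - 4 * X.card + 4 * (((X ×ˢ X).filter fun p => p.1 - p.2 = c).card : ℤ) := by
  unfold Tc
  have h1 : ∀ w : ZMod v, gfun X w * gfun X (w + c)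
      = 1 - 2 * (if w ∈ X then (1:ℤ) else 0) - 2 * (if w + c ∈ X then (1:ℤ) else 0)
        + 4 * ((if w ∈ X then (1:ℤ) else 0) * (if w + c ∈ X then (1:ℤ) else 0)) := by
    intro w; unfold gfun; split_ifs <;> ring
  rw [Finset.sum_congr rfl fun w _ => h1 w]
  simp only [Finset.sum_add_distrib, Finset.sum_sub_distrib, ← Finset.mul_sum,
    chi_sum, chi_sum_shift, count_pairs, Finset.sum_const, Finset.card_univ, ZMod.card,
    nsmul_eq_mul, mul_one]
  ring

lemma GS_pm (g : Fin 4 → ZMod v → ℤ) (hg : ∀ t u, g t u = 1 ∨ g t u = -1)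
    (i j : Fin 4) (x z : ZMod v) : GS g i j x z = 1 ∨ GS g i j x z = -1 := by
  have hneg : ∀ t : ℤ, (t = 1 ∨ t = -1) → (-t = 1 ∨ -t = -1) := by
    rintro t (h | h) <;> simp [h]
  fin_cases i <;> fin_cases j <;>
    simp only [GS, fmk0, fmk1, fmk2, fmk3, Matrix.cons_val_zero, Matrix.cons_val_one,
      Matrix.head_cons, Matrix.cons_val_two, Matrix.tail_cons, Matrix.cons_val_three,
      Pm, Qm, Qn] <;>
    first
    | exact hg _ _
    | exact hneg _ (hg _ _)


end

def IsSDS' {v t : ℕ} (X : Fin t → Finset (ZMod v)) (k : Fin t → ℕ) (lam : ℕ) : Prop :=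
  (∀ i, (X i).card = k i) ∧
  ∀ c : ZMod v, c ≠ 0 →
    (∑ i, ((X i ×ˢ X i).filter fun p => p.1 - p.2 = c).card) = lam

section
variable {v : ℕ} [NeZero v]

lemma main_sum (X : Fin 4 → Finset (ZMod v)) (k : Fin 4 → ℕ) (lam : ℕ)
    (hlam : (lam : ℤ) = (∑ i, (k i : ℤ)) - v) (h : IsSDS' X k lam) (c : ZMod v) :
    ∑ t : Fin 4, Tc (gfun (X t)) (gfun (X t)) c = if c = 0 then ((4 * v : ℕ) : ℤ) else 0 := by
  by_cases hc : c = 0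
  · subst hc
    simp only [if_true, ite_true, reduceIte]
    rw [Finset.sum_congr rfl fun t _ => Tgg_zero (X t)]
    simp only [Finset.sum_const, Finset.card_univ, Fintype.card_fin, nsmul_eq_mul]
    push_cast
    ring
  · simp only [hc, if_false, ite_false]
    rw [Finset.sum_congr rfl fun t (_ : t ∈ Finset.univ) => by rw [Tgg_ne (X t) c, h.1 t]]
    rw [Finset.sum_add_distrib, Finset.sum_sub_distrib, ← Finset.mul_sum, ← Finset.mul_sum]
    have h3 : (∑ t : Fin 4, (((X t ×ˢ X t).filter fun p => p.1 - p.2 = c).card : ℤ))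
        = (lam : ℤ) := by
      rw [← Nat.cast_sum]
      exact_mod_cast congrArg (Nat.cast : ℕ → ℤ) (h.2 c hc)
    rw [h3, hlam]
    simp only [Finset.sum_const, Finset.card_univ, Fintype.card_fin, nsmul_eq_mul]
    ring

lemma Mmul (X : Fin 4 → Finset (ZMod v)) (k : Fin 4 → ℕ) (lam : ℕ)
    (hlam : (lam : ℤ) = (∑ i, (k i : ℤ)) - v) (h : IsSDS' X k lam) :
    (Matrix.of fun (r s : Fin 4 × ZMod v) => GS (fun t => gfun (X t)) r.1 s.1 r.2 s.2) *
      (Matrix.of fun (r s : Fin 4 × ZMod v) => GS (fun t => gfun (X t)) r.1 s.1 r.2 s.2)ᵀ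
      = ((4 * v : ℕ) : ℤ) • (1 : Matrix (Fin 4 × ZMod v) (Fin 4 × ZMod v) ℤ) := by
  ext ⟨i, x⟩ ⟨j, y⟩
  rw [Matrix.mul_apply]
  simp only [Matrix.transpose_apply, Matrix.smul_apply, Matrix.one_apply, Matrix.of_apply,
    smul_eq_mul]
  rw [Fintype.sum_prod_type]
  rw [rowdot (fun t => gfun (X t)) i j x y]
  rw [show (∑ t : Fin 4, Tc (gfun (X t)) (gfun (X t)) (y - x)) =
      if y - x = 0 then ((4 * v : ℕ) : ℤ) else 0 from main_sum X k lam hlam h (y - x)]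
  by_cases hij : i = j <;> by_cases hxy : x = y <;>
    simp [hij, hxy, sub_eq_zero, Prod.ext_iff, eq_comm]

end

theorem stmt4' {v : ℕ} (hv : 1 ≤ v)
    (X : Fin 4 → Finset (ZMod v)) (k : Fin 4 → ℕ) (lam : ℕ)
    (hlam : (lam : ℤ) = (∑ i, (k i : ℤ)) - v)
    (h : IsSDS' X k lam) :
    ∃ H : Matrix (Fin (4 * v)) (Fin (4 * v)) ℤ,
      (∀ i j, H i j = 1 ∨ H i j = -1) ∧
      H * Hᵀ = (4 * v : ℤ) • (1 : Matrix (Fin (4 * v)) (Fin (4 * v)) ℤ) := by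
  haveI : NeZero v := ⟨by omega⟩
  have hcard : Fintype.card (Fin (4 * v)) = Fintype.card (Fin 4 × ZMod v) := by
    simp [ZMod.card]
  let e : Fin (4 * v) ≃ Fin 4 × ZMod v := Fintype.equivOfCardEq hcard
  let M : Matrix (Fin 4 × ZMod v) (Fin 4 × ZMod v) ℤ :=
    Matrix.of fun r s => GS (fun t => gfun (X t)) r.1 s.1 r.2 s.2
  refine ⟨M.submatrix e e, ?_, ?_⟩
  · intro i j
    exact GS_pm _ (fun t u => gfun_pm (X t) u) _ _ _ _
  · rw [Matrix.transpose_submatrix, Matrix.submatrix_mul_equiv, Mmul X k lam hlam h]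
    ext i j
    simp only [Matrix.submatrix_apply, Matrix.smul_apply, Matrix.one_apply,
      EmbeddingLike.apply_eq_iff_eq, smul_eq_mul]
    push_cast
    ring


theorem stmt4 {v : ℕ} (hv : 1 ≤ v)
    (X : Fin 4 → Finset (ZMod v)) (k : Fin 4 → ℕ) (lam : ℕ)
    (hlam : (lam : ℤ) = (∑ i, (k i : ℤ)) - v)
    (h : IsSDS X k lam) :
    ∃ H : Matrix (Fin (4 * v)) (Fin (4 * v)) ℤ,
      (∀ i j, H i j = 1 ∨ H i j = -1) ∧
      H * Hᵀ = (4 * v : ℤ) • (1 : Matrix (Fin (4 * v)) (Fin (4 * v)) ℤ) := by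
  exact stmt4' hv X k lam hlam h
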